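/- For every integer k with 2 ≤ k ≤ d−1 there is a constant c > 0 depending only on d such that if the characteristic of F_q exceeds c, then the following equivalence holds: the (d−k)×d Jacobian matrix (∂h_j/∂x_i)(x) has rank d−k at every point x ∈ H̄_k with x ≠ 0 (i.e. H̄_k is smooth away from the origin) if and only if d−k ∈ {1, 2, 3}. -/

import Mathlib

open MvPolynomial

noncomputable section

/-- The homogeneous polynomial `h_{j+1}(x) = x_1^{j+2} + ⋯ + x_k^{j+2} − x_{k+j+1}^{j+2}`
(in 0-based indexing, `j : Fin (d-k)` corresponds to the defining equation `h_{j+1}`). -/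
def hpoly (K : Type) [CommRing K] (d k : ℕ) (j : Fin (d - k)) : MvPolynomial (Fin d) K :=
  (∑ i : Fin d, if (i : ℕ) < k then X i ^ ((j : ℕ) + 2) else 0)
    - X (⟨k + (j : ℕ), by have h := j.isLt; omega⟩ : Fin d) ^ ((j : ℕ) + 2)

/-- The homogeneous variety `H̄_k` as a set of points with coordinates in `K`. -/
def Hset (K : Type) [CommRing K] (d k : ℕ) : Set (Fin d → K) :=
  {x | ∀ j : Fin (d - k), eval x (hpoly K d k j) = 0}

open scoped Classical in
/-- The set of `F_q`-points of the homogeneous variety `H_k`, as a finite set. -/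
def Hfin (F : Type) [Field F] [Fintype F] (d k : ℕ) : Finset (Fin d → F) :=
  Finset.univ.filter fun x => ∀ j : Fin (d - k), eval x (hpoly F d k j) = 0

open scoped ENNReal in
/-- `L^p` norm with respect to the normalized counting measure on `F_q^d`. -/
def lpNorm {F : Type} [Fintype F] {d : ℕ} (p : ℝ≥0∞) (f : (Fin d → F) → ℂ) : ℝ :=
  if p = ⊤ then ⨆ x, ‖f x‖
  else (((Fintype.card F : ℝ) ^ d)⁻¹ * ∑ x, ‖f x‖ ^ p.toReal) ^ (1 / p.toReal)

/-- Convolution `f ∗ dσ` with the normalized surface measure on `V`. -/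
def convMeas {F : Type} [Field F] [Fintype F] {d : ℕ} (V : Finset (Fin d → F))
    (f : (Fin d → F) → ℂ) : (Fin d → F) → ℂ :=
  fun y => (V.card : ℂ)⁻¹ * ∑ x ∈ V, f (y - x)

end

/-- The `(d−k) × d` Jacobian matrix `(∂h_j/∂x_i)(x)` of the system defining `H̄_k`. -/
noncomputable def jacH (K : Type) [CommRing K] (d k : ℕ) (x : Fin d → K) :
    Matrix (Fin (d - k)) (Fin d) K :=
  Matrix.of fun j i => eval x (pderiv i (hpoly K d k j))


section HelperLemmas

open Matrix

variable {K : Type} [Field K]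

lemma jac_entry (d k : ℕ) (x : Fin d → K) (j : Fin (d-k)) (i : Fin d) :
    jacH K d k x j i =
      (if (i : ℕ) < k then (((j:ℕ)+2 : ℕ) : K) * x i ^ ((j:ℕ)+1) else 0)
      - (if (i : ℕ) = k + (j:ℕ) then (((j:ℕ)+2 : ℕ) : K) * x i ^ ((j:ℕ)+1) else 0) := by
  classical
  simp only [jacH, hpoly, Matrix.of_apply, map_sub, map_sum, apply_ite (pderiv i), map_zero,
    pderiv_pow, pderiv_X, Pi.single_apply, mul_ite, mul_one, mul_zero,
    apply_ite (eval x), _root_.map_mul, map_pow, eval_X, map_natCast]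
  have hswap : ∀ i' : Fin d,
      (if (i' : ℕ) < k then if i' = i then (((j:ℕ)+2 : ℕ) : K) * x i' ^ ((j:ℕ)+2-1) else 0 else 0)
      = if i' = i then (if (i' : ℕ) < k then (((j:ℕ)+2 : ℕ) : K) * x i' ^ ((j:ℕ)+2-1) else 0) else 0 := by
    intro i'; split_ifs <;> rfl
  rw [Finset.sum_congr rfl fun i' _ => hswap i', Finset.sum_ite_eq' Finset.univ i]
  have he : (j:ℕ)+2-1 = (j:ℕ)+1 := rfl
  simp only [Finset.mem_univ, if_true, he]
  congr 1
  by_cases h : (i:ℕ) = k + (j:ℕ)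
  · have : (⟨k + (j:ℕ), by have := j.isLt; omega⟩ : Fin d) = i := by
      apply Fin.ext; simp [h]
    simp [h, this]
  · have : (⟨k + (j:ℕ), by have := j.isLt; omega⟩ : Fin d) ≠ i := by
      intro hc; exact h (by rw [← hc])
    simp [h, this]

lemma eval_hpoly (d k : ℕ) (x : Fin d → K) (j : Fin (d-k)) :
    eval x (hpoly K d k j) =
      (∑ i : Fin d, if (i : ℕ) < k then x i ^ ((j:ℕ)+2) else 0)
        - x (⟨k + (j:ℕ), by have := j.isLt; omega⟩ : Fin d) ^ ((j:ℕ)+2) := by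
  simp [hpoly, apply_ite (eval x)]

lemma sum_one_support {n : ℕ} (f : Fin n → K) (a : Fin n)
    (h : ∀ j, j ≠ a → f j = 0) : ∑ j, f j = f a :=
  Finset.sum_eq_single_of_mem a (Finset.mem_univ a) (fun j _ hj => h j hj)

lemma zero_of_first_zero {d k : ℕ} (x : Fin d → K)
    (hx : x ∈ Hset K d k) (h0 : ∀ i : Fin d, (i : ℕ) < k → x i = 0) : x = 0 := by
  funext i
  show x i = 0
  by_cases hi : (i : ℕ) < k
  · exact h0 i hi
  · have hik : k ≤ (i:ℕ) := Nat.le_of_not_lt hi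
    have hid := i.isLt
    set j : Fin (d - k) := ⟨(i:ℕ) - k, by omega⟩ with hj
    have heq := hx j
    rw [eval_hpoly] at heq
    have hb : (⟨k + (j:ℕ), by have := j.isLt; omega⟩ : Fin d) = i := by
      apply Fin.ext; simp only [hj]; omega
    have hsum : (∑ i' : Fin d, if (i' : ℕ) < k then x i' ^ ((j:ℕ)+2) else 0) = 0 := by
      apply Finset.sum_eq_zero; intro i' _
      by_cases h' : (i':ℕ) < k
      · simp [h', h0 i' h']
      · simp [h']
    rw [hsum, hb, zero_sub, neg_eq_zero] at heq
    exact pow_eq_zero_iff (by omega) |>.mp heq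

lemma rank_eq_iff_inj {m n : ℕ} (A : Matrix (Fin m) (Fin n) K) :
    A.rank = m ↔ ∀ v : Fin m → K, Aᵀ.mulVec v = 0 → v = 0 := by
  rw [← Matrix.rank_transpose]
  unfold Matrix.rank
  have htot := LinearMap.finrank_range_add_finrank_ker (Aᵀ.mulVecLin)
  rw [Module.finrank_pi K] at htot
  simp only [Fintype.card_fin] at htot
  constructor
  · intro h v hv
    have hker : LinearMap.ker Aᵀ.mulVecLin = ⊥ := by
      apply Submodule.finrank_eq_zero.mp; omega
    exact LinearMap.ker_eq_bot'.mp hker v (by rw [Matrix.mulVecLin_apply]; exact hv)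
  · intro h
    have hker : LinearMap.ker Aᵀ.mulVecLin = ⊥ :=
      LinearMap.ker_eq_bot'.mpr fun v hv => h v (by rw [← Matrix.mulVecLin_apply]; exact hv)
    rw [hker] at htot; simp at htot; omega

lemma count_lemma {p : ℕ} [CharP K p] {ι : Type} (s : Finset ι) (f : ι → K) (v : K)
    (h : ∀ i ∈ s, f i = 0 ∨ f i = v) (hsum : ∑ i ∈ s, f i = 0) (hcard : s.card < p) :
    ∀ i ∈ s, f i = 0 := by
  classical
  by_cases hv : v = 0
  · intro i hi; rcases h i hi with h0 | h0 <;> simp [h0, hv]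
  · set t := s.filter (fun i => f i ≠ 0) with ht
    have hsum2 : ∑ i ∈ s, f i = ∑ i ∈ t, f i := by
      rw [ht]; exact (Finset.sum_filter_ne_zero s).symm
    have hval : ∀ i ∈ t, f i = v := by
      intro i hi
      rw [ht, Finset.mem_filter] at hi
      rcases h i hi.1 with h0 | h0
      · exact absurd h0 hi.2
      · exact h0
    have : (t.card : K) * v = 0 := by
      rw [← hsum, hsum2, Finset.sum_congr rfl hval, Finset.sum_const, nsmul_eq_mul]
    rcases mul_eq_zero.mp this with h0 | h0
    · have hdvd : p ∣ t.card := (CharP.cast_eq_zero_iff K p _).mp h0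
      have hle : t.card ≤ s.card := Finset.card_filter_le _ _
      have : t.card = 0 := by
        rcases Nat.eq_zero_or_pos t.card with h1 | h1
        · exact h1
        · exact absurd (Nat.le_of_dvd h1 hdvd) (by omega)
      intro i hi
      by_contra hfi
      have : i ∈ t := by rw [ht, Finset.mem_filter]; exact ⟨hi, hfi⟩
      simp [Finset.card_eq_zero.mp ‹t.card = 0›] at this
    · exact absurd h0 hv

lemma sum_fin_one {n : ℕ} (h : n = 1) {M : Type*} [AddCommMonoid M] (f : Fin n → M) :
    ∑ j, f j = f ⟨0, by omega⟩ := by subst h; simp [Fin.sum_univ_one]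

lemma sum_fin_two {n : ℕ} (h : n = 2) {M : Type*} [AddCommMonoid M] (f : Fin n → M) :
    ∑ j, f j = f ⟨0, by omega⟩ + f ⟨1, by omega⟩ := by subst h; rw [Fin.sum_univ_two]; rfl

lemma sum_fin_three {n : ℕ} (h : n = 3) {M : Type*} [AddCommMonoid M] (f : Fin n → M) :
    ∑ j, f j = f ⟨0, by omega⟩ + f ⟨1, by omega⟩ + f ⟨2, by omega⟩ := by
  subst h; rw [Fin.sum_univ_three]; rfl

lemma sum_two_support {n : ℕ} (f : Fin n → K) (a b : Fin n) (hab : a ≠ b)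
    (h : ∀ j, j ≠ a → j ≠ b → f j = 0) : ∑ j, f j = f a + f b := by
  classical
  rw [← Finset.sum_pair hab]
  apply (Finset.sum_subset (Finset.subset_univ _) _).symm
  intro j _ hj
  simp only [Finset.mem_insert, Finset.mem_singleton, not_or] at hj
  exact h j hj.1 hj.2

-- quadratic factorization over an algebraically closed field
lemma quad_factor [IsAlgClosed K] (hchar : (2:K) ≠ 0) (B C : K) :
    ∃ r s : K, ∀ t : K, t^2 + B*t + C = (t - r) * (t - s) := by
  obtain ⟨w, hw⟩ := IsAlgClosed.exists_pow_nat_eq (B^2 - 4*C) (n := 2) (by norm_num)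
  refine ⟨(-B + w) * (2:K)⁻¹, (-B - w) * (2:K)⁻¹, fun t => ?_⟩
  field_simp
  ring_nf
  linear_combination hw

lemma smooth_small {p : ℕ} [CharP K p] [IsAlgClosed K] {d k : ℕ}
    (hk2 : 2 ≤ k) (hk1 : k ≤ d - 1) (hd : 3 ≤ d) (hpd : d < p)
    (hm : d - k = 1 ∨ d - k = 2 ∨ d - k = 3)
    (x : Fin d → K) (hx : x ∈ Hset K d k) (hx0 : x ≠ 0) :
    (jacH K d k x).rank = d - k := by
  classical
  have hcast : ∀ n : ℕ, 0 < n → n ≤ d → (n : K) ≠ 0 := by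
    intro n hn hnd h0
    have hdvd := (CharP.cast_eq_zero_iff K p n).mp h0
    have := Nat.le_of_dvd hn hdvd; omega
  rw [rank_eq_iff_inj]
  intro v hv
  by_contra hv0
  apply hx0
  have hrel : ∀ i : Fin d, ∑ j : Fin (d-k), jacH K d k x j i * v j = 0 := by
    intro i
    have h := congrFun hv i
    simpa [Matrix.mulVec, dotProduct, Matrix.transpose_apply] using h
  set S : Finset (Fin d) := Finset.univ.filter (fun i => (i:ℕ) < k) with hS
  have hScard : S.card < p := by
    have h1 : S.card ≤ d := le_trans (Finset.card_filter_le _ _) (by simp)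
    omega
  have hA : ∀ i ∈ S, ∑ j : Fin (d-k), (((j:ℕ)+2 : ℕ) : K) * x i ^ ((j:ℕ)+1) * v j = 0 := by
    intro i hi
    rw [hS, Finset.mem_filter] at hi
    have heq : (∑ j : Fin (d-k), jacH K d k x j i * v j)
        = ∑ j : Fin (d-k), (((j:ℕ)+2 : ℕ) : K) * x i ^ ((j:ℕ)+1) * v j := by
      apply Finset.sum_congr rfl
      intro j _
      rw [jac_entry, if_pos hi.2, if_neg (by omega), sub_zero]
    rw [← heq]; exact hrel i
  have hB : ∀ j : Fin (d-k), v j ≠ 0 →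
      x (⟨k + (j:ℕ), by have := j.isLt; omega⟩ : Fin d) = 0 := by
    intro j hvj
    set b : Fin d := ⟨k + (j:ℕ), by have := j.isLt; omega⟩ with hbdef
    have h := hrel b
    have hone : (∑ j' : Fin (d-k), jacH K d k x j' b * v j')
        = -((((j:ℕ)+2:ℕ):K) * x b ^ ((j:ℕ)+1) * v j) := by
      rw [sum_one_support _ j (fun j' hj' => ?_)]
      · rw [jac_entry, if_neg (by simp [hbdef]), if_pos (by simp [hbdef]), zero_sub, neg_mul]
      · rw [jac_entry, if_neg (by simp [hbdef]), if_neg ?_, sub_zero, zero_mul]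
        have : (j':ℕ) ≠ (j:ℕ) := fun hc => hj' (Fin.ext hc)
        simp [hbdef]; omega
    rw [hone, neg_eq_zero] at h
    have hc : (((j:ℕ)+2:ℕ):K) ≠ 0 := hcast _ (by omega) (by have := j.isLt; omega)
    rcases mul_eq_zero.mp h with h1 | h1
    · rcases mul_eq_zero.mp h1 with h2 | h2
      · exact absurd h2 hc
      · exact pow_eq_zero_iff (by omega) |>.mp h2
    · exact absurd h1 hvj
  have hP : ∀ j : Fin (d-k), v j ≠ 0 → ∑ i ∈ S, x i ^ ((j:ℕ)+2) = 0 := by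
    intro j hvj
    have h := hx j
    rw [eval_hpoly, hB j hvj, zero_pow (by omega), sub_zero] at h
    rw [hS, Finset.sum_filter]
    exact h
  suffices h0 : ∀ i ∈ S, x i = 0 by
    apply zero_of_first_zero x hx
    intro i hik
    exact h0 i (by rw [hS, Finset.mem_filter]; exact ⟨Finset.mem_univ i, hik⟩)
  obtain ⟨j0, hj0⟩ : ∃ j, v j ≠ 0 := Function.ne_iff.mp hv0
  have h2K : (2:K) ≠ 0 := by have := hcast 2 (by omega) (by omega); simpa using this
  have h3K : (3:K) ≠ 0 := by have := hcast 3 (by omega) (by omega); simpa using this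
  have hcj : ∀ j : Fin (d-k), (((j:ℕ)+2:ℕ):K) ≠ 0 :=
    fun j => hcast _ (by omega) (by have := j.isLt; omega)
  rcases hm with hm1 | hm2 | hm3
  · -- d - k = 1
    intro i hi
    have h := hA i hi
    rw [sum_fin_one hm1] at h
    have hj0' : j0 = ⟨0, by omega⟩ := Fin.ext (by have := j0.isLt; omega)
    rw [hj0'] at hj0
    rcases mul_eq_zero.mp h with h1 | h1
    · rcases mul_eq_zero.mp h1 with h2 | h2
      · exact absurd h2 (hcj _)
      · exact pow_eq_zero_iff (by simp) |>.mp h2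
    · exact absurd h1 hj0
  · -- d - k = 2
    have hA2 : ∀ i ∈ S, (2:K) * x i * v ⟨0, by omega⟩ + 3 * x i^2 * v ⟨1, by omega⟩ = 0 := by
      intro i hi
      have h := hA i hi
      rw [sum_fin_two hm2] at h
      norm_num at h
      exact h
    by_cases hv1 : v ⟨1, by omega⟩ = (0:K)
    · have hv0' : v ⟨0, by omega⟩ ≠ 0 := by
        rcases (by have := j0.isLt; omega : (j0:ℕ) = 0 ∨ (j0:ℕ) = 1) with h0 | h0
        · have he : j0 = ⟨0, by omega⟩ := Fin.ext h0
          rw [he] at hj0; exact hj0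
        · have he : j0 = ⟨1, by omega⟩ := Fin.ext h0
          rw [he] at hj0; exact absurd hv1 hj0
      intro i hi
      have h := hA2 i hi
      rw [hv1, mul_zero, add_zero] at h
      rcases mul_eq_zero.mp h with h1 | h1
      · rcases mul_eq_zero.mp h1 with h2 | h2
        · exact absurd h2 h2K
        · exact h2
      · exact absurd h1 hv0'
    · have h3v : (3:K) * v ⟨1, by omega⟩ ≠ 0 := mul_ne_zero h3K hv1
      set r : K := -(2 * v ⟨0, by omega⟩) * (3 * v ⟨1, by omega⟩)⁻¹ with hr
      have hroot : ∀ i ∈ S, x i = 0 ∨ x i = r := by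
        intro i hi
        have h := hA2 i hi
        have hfac : x i * ((3 * v ⟨1, by omega⟩) * (x i - r))
            = 2 * x i * v ⟨0, by omega⟩ + 3 * x i^2 * v ⟨1, by omega⟩ := by
          rw [hr]; field_simp; ring
        rw [← hfac] at h
        rcases mul_eq_zero.mp h with h1 | h1
        · exact Or.inl h1
        · rcases mul_eq_zero.mp h1 with h2 | h2
          · exact absurd h2 h3v
          · exact Or.inr (sub_eq_zero.mp h2)
      have hP3 : ∑ i ∈ S, x i ^ 3 = 0 := by
        have h := hP ⟨1, by omega⟩ hv1
        norm_num at h; exact h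
      have hall := count_lemma S (fun i => x i ^ 3) (r ^ 3)
        (fun i hi => by
          rcases hroot i hi with h | h
          · exact Or.inl (by simp only [h]; norm_num)
          · exact Or.inr (by simp only [h])) hP3 hScard
      intro i hi
      exact pow_eq_zero_iff (by norm_num) |>.mp (hall i hi)
  · -- d - k = 3
    have h4K : (4:K) ≠ 0 := by
      have h := hcast 4 (by omega) (by omega); simpa using h
    have hA3 : ∀ i ∈ S, (2:K) * x i * v ⟨0, by omega⟩ + 3 * x i^2 * v ⟨1, by omega⟩
        + 4 * x i^3 * v ⟨2, by omega⟩ = 0 := by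
      intro i hi
      have h := hA i hi
      rw [sum_fin_three hm3] at h
      norm_num at h
      exact h
    by_cases hv2 : v ⟨2, by omega⟩ = (0:K)
    · by_cases hv1 : v ⟨1, by omega⟩ = (0:K)
      · have hv0' : v ⟨0, by omega⟩ ≠ 0 := by
          rcases (by have := j0.isLt; omega : (j0:ℕ) = 0 ∨ (j0:ℕ) = 1 ∨ (j0:ℕ) = 2)
            with h0 | h0 | h0
          · have he : j0 = ⟨0, by omega⟩ := Fin.ext h0
            rw [he] at hj0; exact hj0
          · have he : j0 = ⟨1, by omega⟩ := Fin.ext h0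
            rw [he] at hj0; exact absurd hv1 hj0
          · have he : j0 = ⟨2, by omega⟩ := Fin.ext h0
            rw [he] at hj0; exact absurd hv2 hj0
        intro i hi
        have h := hA3 i hi
        rw [hv1, hv2, mul_zero, mul_zero, add_zero, add_zero] at h
        rcases mul_eq_zero.mp h with h1 | h1
        · rcases mul_eq_zero.mp h1 with h2 | h2
          · exact absurd h2 h2K
          · exact h2
        · exact absurd h1 hv0'
      · have h3v : (3:K) * v ⟨1, by omega⟩ ≠ 0 := mul_ne_zero h3K hv1
        set r : K := -(2 * v ⟨0, by omega⟩) * (3 * v ⟨1, by omega⟩)⁻¹ with hr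
        have hroot : ∀ i ∈ S, x i = 0 ∨ x i = r := by
          intro i hi
          have h := hA3 i hi
          rw [hv2, mul_zero, add_zero] at h
          have hfac : x i * ((3 * v ⟨1, by omega⟩) * (x i - r))
              = 2 * x i * v ⟨0, by omega⟩ + 3 * x i^2 * v ⟨1, by omega⟩ := by
            rw [hr]; field_simp; ring
          rw [← hfac] at h
          rcases mul_eq_zero.mp h with h1 | h1
          · exact Or.inl h1
          · rcases mul_eq_zero.mp h1 with h2 | h2
            · exact absurd h2 h3v
            · exact Or.inr (sub_eq_zero.mp h2)
        have hP3 : ∑ i ∈ S, x i ^ 3 = 0 := by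
          have h := hP ⟨1, by omega⟩ hv1
          norm_num at h; exact h
        have hall := count_lemma S (fun i => x i ^ 3) (r ^ 3)
          (fun i hi => by
            rcases hroot i hi with h | h
            · exact Or.inl (by simp only [h]; norm_num)
            · exact Or.inr (by simp only [h])) hP3 hScard
        intro i hi
        exact pow_eq_zero_iff (by norm_num) |>.mp (hall i hi)
    · -- v2 ≠ 0
      have h4v : (4:K) * v ⟨2, by omega⟩ ≠ 0 := mul_ne_zero h4K hv2
      set B : K := (3 * v ⟨1, by omega⟩) * (4 * v ⟨2, by omega⟩)⁻¹ with hBdef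
      set C : K := (2 * v ⟨0, by omega⟩) * (4 * v ⟨2, by omega⟩)⁻¹ with hCdef
      obtain ⟨r, s, hfac⟩ := quad_factor h2K B C
      have hroot : ∀ i ∈ S, x i = 0 ∨ x i = r ∨ x i = s := by
        intro i hi
        have h := hA3 i hi
        have hfac2 : x i * ((x i - r) * (x i - s)) * (4 * v ⟨2, by omega⟩)
            = 2 * x i * v ⟨0, by omega⟩ + 3 * x i^2 * v ⟨1, by omega⟩
              + 4 * x i^3 * v ⟨2, by omega⟩ := by
          rw [← hfac (x i), hBdef, hCdef]; field_simp; ring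
        rw [← hfac2] at h
        rcases mul_eq_zero.mp h with h1 | h1
        · rcases mul_eq_zero.mp h1 with h2 | h2
          · exact Or.inl h2
          · rcases mul_eq_zero.mp h2 with h3 | h3
            · exact Or.inr (Or.inl (sub_eq_zero.mp h3))
            · exact Or.inr (Or.inr (sub_eq_zero.mp h3))
        · exact absurd h1 h4v
      have hP4 : ∑ i ∈ S, x i ^ 4 = 0 := by
        have h := hP ⟨2, by omega⟩ hv2
        norm_num at h; exact h
      by_cases hv1 : v ⟨1, by omega⟩ = (0:K)
      · have hB0 : B = 0 := by rw [hBdef, hv1]; ring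
        have hsum_rs : r + s = -B := by
          have h1 := hfac 1
          have h0 := hfac 0
          linear_combination h1 - h0
        have hs : s = -r := by linear_combination hsum_rs - hB0
        have hall := count_lemma S (fun i => x i ^ 4) (r ^ 4)
          (fun i hi => by
            rcases hroot i hi with h | h | h
            · exact Or.inl (by simp only [h]; norm_num)
            · exact Or.inr (by simp only [h])
            · exact Or.inr (by simp only [h, hs]; ring)) hP4 hScard
        intro i hi
        exact pow_eq_zero_iff (by norm_num) |>.mp (hall i hi)
      · have hP3 : ∑ i ∈ S, x i ^ 3 = 0 := by
          have h := hP ⟨1, by omega⟩ hv1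
          norm_num at h; exact h
        have hc1 := count_lemma S (fun i => x i ^ 3 * (x i - s)) (r ^ 3 * (r - s))
          (fun i hi => by
            rcases hroot i hi with h | h | h
            · exact Or.inl (by simp only [h]; norm_num)
            · exact Or.inr (by simp only [h])
            · exact Or.inl (by simp only [h, sub_self, mul_zero]))
          (by
            rw [Finset.sum_congr rfl (fun i _ => by ring :
              ∀ i ∈ S, x i ^ 3 * (x i - s) = x i ^ 4 - s * x i ^ 3)]
            rw [Finset.sum_sub_distrib, ← Finset.mul_sum, hP3, hP4, mul_zero, sub_zero])
          hScard
        have hc2 := count_lemma S (fun i => x i ^ 3 * (x i - r)) (s ^ 3 * (s - r))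
          (fun i hi => by
            rcases hroot i hi with h | h | h
            · exact Or.inl (by simp only [h]; norm_num)
            · exact Or.inl (by simp only [h, sub_self, mul_zero])
            · exact Or.inr (by simp only [h]))
          (by
            rw [Finset.sum_congr rfl (fun i _ => by ring :
              ∀ i ∈ S, x i ^ 3 * (x i - r) = x i ^ 4 - r * x i ^ 3)]
            rw [Finset.sum_sub_distrib, ← Finset.mul_sum, hP3, hP4, mul_zero, sub_zero])
          hScard
        intro i hi
        by_cases hxi : x i = 0
        · exact hxi
        · have hx3 : x i ^ 3 ≠ 0 := pow_ne_zero _ hxi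
          have hxs : x i = s := sub_eq_zero.mp ((mul_eq_zero.mp (hc1 i hi)).resolve_left hx3)
          have hxr : x i = r := sub_eq_zero.mp ((mul_eq_zero.mp (hc2 i hi)).resolve_left hx3)
          have hrs : r = s := by rw [← hxr, hxs]
          have hall := count_lemma S (fun i' => x i' ^ 4) (r ^ 4)
            (fun i' hi' => by
              rcases hroot i' hi' with h | h | h
              · exact Or.inl (by simp only [h]; norm_num)
              · exact Or.inr (by simp only [h])
              · exact Or.inr (by simp only [h, ← hrs])) hP4 hScard
          exact absurd (pow_eq_zero_iff (by norm_num) |>.mp (hall i hi)) hxi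


lemma singular_big {p : ℕ} [CharP K p] [IsAlgClosed K] {d k : ℕ}
    (hk2 : 2 ≤ k) (hkd : k ≤ d - 1) (hpd : d < p) (hm4 : 4 ≤ d - k) :
    ∃ x ∈ Hset K d k, x ≠ 0 ∧ (jacH K d k x).rank ≠ d - k := by
  classical
  have hd6 : 6 ≤ d := by omega
  have hcast : ∀ n : ℕ, 0 < n → n ≤ d → (n : K) ≠ 0 := by
    intro n hn hnd h0
    have hdvd := (CharP.cast_eq_zero_iff K p n).mp h0
    have := Nat.le_of_dvd hn hdvd; omega
  choose y hy using fun (j : Fin (d-k)) =>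
    IsAlgClosed.exists_pow_nat_eq (2:K) (n := (j:ℕ)+2) (by omega)
  set x : Fin d → K := fun i =>
    if (i:ℕ) = 0 then 1 else if (i:ℕ) = 1 then -1
    else if (i:ℕ) < k then 0
    else if Even ((i:ℕ) - k) then y ⟨(i:ℕ) - k, by have := i.isLt; omega⟩ else 0 with hxdef
  have hx0 : x ⟨0, by omega⟩ = 1 := by simp [hxdef]
  have hx1 : x ⟨1, by omega⟩ = -1 := by simp [hxdef]
  have hxsmall : ∀ i : Fin d, (i:ℕ) < k → (i:ℕ) ≠ 0 → (i:ℕ) ≠ 1 → x i = 0 := by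
    intro i h1 h2 h3
    rw [hxdef]
    simp only []
    rw [if_neg h2, if_neg h3, if_pos h1]
  have hxbig : ∀ j : Fin (d-k),
      x (⟨k + (j:ℕ), by have := j.isLt; omega⟩ : Fin d) = if Even (j:ℕ) then y j else 0 := by
    intro j
    rw [hxdef]
    simp only []
    rw [if_neg (by omega), if_neg (by omega), if_neg (by omega)]
    have h3 : k + (j:ℕ) - k = (j:ℕ) := by omega
    by_cases he : Even ((j:ℕ))
    · rw [if_pos (by rw [h3]; exact he), if_pos he]
      congr 1
      exact Fin.ext h3
    · rw [if_neg (by rw [h3]; exact he), if_neg he]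
  have hne01 : (⟨0, by omega⟩ : Fin d) ≠ ⟨1, by omega⟩ := by
    intro hc
    have := congrArg Fin.val hc
    simp at this
  have hmem : x ∈ Hset K d k := by
    intro j
    rw [eval_hpoly]
    have hsum : (∑ i : Fin d, if (i : ℕ) < k then x i ^ ((j:ℕ)+2) else 0)
        = 1 + (-1:K) ^ ((j:ℕ)+2) := by
      rw [sum_two_support _ ⟨0, by omega⟩ ⟨1, by omega⟩ hne01 ?_]
      · rw [if_pos (show ((⟨0, by omega⟩ : Fin d):ℕ) < k by simp; omega),
          if_pos (show ((⟨1, by omega⟩ : Fin d):ℕ) < k by simp; omega), hx0, hx1, one_pow]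
      · intro i hi0 hi1
        by_cases hik : (i:ℕ) < k
        · rw [if_pos hik, hxsmall i hik
            (fun hc => hi0 (Fin.ext (by simpa using hc)))
            (fun hc => hi1 (Fin.ext (by simpa using hc))), zero_pow (by omega)]
        · rw [if_neg hik]
    rw [hsum, hxbig j]
    rcases Nat.even_or_odd (j:ℕ) with he | ho
    · rw [if_pos he, hy j]
      have : Even ((j:ℕ)+2) := by rcases he with ⟨t, ht⟩; exact ⟨t+1, by omega⟩
      rw [this.neg_one_pow]
      ring
    · rw [if_neg (Nat.not_even_iff_odd.mpr ho)]
      have : Odd ((j:ℕ)+2) := by rcases ho with ⟨t, ht⟩; exact ⟨t+1, by omega⟩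
      rw [this.neg_one_pow, zero_pow (by omega)]
      ring
  have hxne : x ≠ 0 := by
    intro hc
    have := congrFun hc ⟨0, by omega⟩
    rw [hx0] at this
    exact one_ne_zero this
  refine ⟨x, hmem, hxne, ?_⟩
  intro hrk
  set v : Fin (d-k) → K := fun j => if (j:ℕ) = 1 then 5 else if (j:ℕ) = 3 then -3 else 0
    with hvdef
  have hne13 : (⟨1, by omega⟩ : Fin (d-k)) ≠ ⟨3, by omega⟩ := by
    intro hc
    have := congrArg Fin.val hc
    simp at this
  have hv1 : v ⟨1, by omega⟩ = 5 := by simp [hvdef]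
  have hv3 : v ⟨3, by omega⟩ = -3 := by simp [hvdef]
  have hmv : (jacH K d k x)ᵀ.mulVec v = 0 := by
    funext i
    show dotProduct _ _ = _
    rw [dotProduct]
    simp only [Matrix.transpose_apply, Pi.zero_apply]
    by_cases hik : (i:ℕ) < k
    · have hterm : ∀ j : Fin (d-k), jacH K d k x j i * v j
          = (((j:ℕ)+2 : ℕ) : K) * x i ^ ((j:ℕ)+1) * v j := by
        intro j
        rw [jac_entry, if_pos hik, if_neg (by omega), sub_zero]
      rw [Finset.sum_congr rfl (fun j _ => hterm j)]
      rw [sum_two_support _ ⟨1, by omega⟩ ⟨3, by omega⟩ hne13 ?_]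
      · rw [hv1, hv3]
        have hx24 : x i ^ 2 = x i ^ 4 := by
          by_cases h0 : (i:ℕ) = 0
          · have : i = ⟨0, by omega⟩ := Fin.ext h0
            rw [this, hx0]; norm_num
          · by_cases h1 : (i:ℕ) = 1
            · have : i = ⟨1, by omega⟩ := Fin.ext h1
              rw [this, hx1]; norm_num
            · rw [hxsmall i hik h0 h1]; norm_num
        norm_num
        linear_combination (15:K) * hx24
      · intro j hj1 hj3
        have hv0 : v j = 0 := by
          rw [hvdef]
          simp only []
          rw [if_neg (fun hc => hj1 (Fin.ext hc)), if_neg (fun hc => hj3 (Fin.ext hc))]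
        rw [hv0, mul_zero]
    · apply Finset.sum_eq_zero
      intro j _
      by_cases hj13 : (j:ℕ) = 1 ∨ (j:ℕ) = 3
      · rw [jac_entry, if_neg hik]
        by_cases hie : (i:ℕ) = k + (j:ℕ)
        · rw [if_pos hie]
          have hxi : x i = 0 := by
            have hieq : i = ⟨k + (j:ℕ), by have := j.isLt; omega⟩ := Fin.ext hie
            rw [hieq, hxbig j, if_neg ?_]
            rcases hj13 with h | h <;> simp [h, Nat.even_iff]
          rw [hxi, zero_pow (by omega), mul_zero, zero_sub, neg_zero, zero_mul]
        · rw [if_neg hie, sub_zero, zero_mul]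
      · have hv0 : v j = 0 := by
          push_neg at hj13
          rw [hvdef]
          simp only []
          rw [if_neg hj13.1, if_neg hj13.2]
        rw [hv0, mul_zero]
  have hvz := (rank_eq_iff_inj (jacH K d k x)).mp hrk v hmv
  have h5 : v ⟨1, by omega⟩ = 0 := by rw [hvz]; rfl
  rw [hv1] at h5
  have : ((5:ℕ):K) ≠ 0 := hcast 5 (by omega) (by omega)
  simp at this
  exact this h5

end HelperLemmas

/-- For every `2 ≤ k ≤ d−1`, if the characteristic is large enough
(depending only on `d`), then the Jacobian of the system defining `H̄_k` has rank `d−k`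
at every nonzero point of `H̄_k` (smoothness away from the origin) iff `d−k ∈ {1,2,3}`. -/
theorem Hbar_smooth_iff (d : ℕ) (hd : 3 ≤ d) :
    ∃ c : ℕ, 0 < c ∧ ∀ k : ℕ, 2 ≤ k → k ≤ d - 1 →
      ∀ (F : Type) [Field F] [Fintype F], c < ringChar F →
        ((∀ x ∈ Hset (AlgebraicClosure F) d k, x ≠ 0 →
            (jacH (AlgebraicClosure F) d k x).rank = d - k) ↔
          (d - k = 1 ∨ d - k = 2 ∨ d - k = 3)) := by
  classical
  refine ⟨d, by omega, ?_⟩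
  intro k hk2 hk1 F _ _ hchar
  haveI : CharP F (ringChar F) := ringChar.charP F
  haveI : CharP (AlgebraicClosure F) (ringChar F) :=
    charP_of_injective_algebraMap (algebraMap F (AlgebraicClosure F)).injective _
  constructor
  · intro hsm
    by_contra hcon
    push_neg at hcon
    obtain ⟨hc1, hc2, hc3⟩ := hcon
    have hm4 : 4 ≤ d - k := by omega
    obtain ⟨x, hmem, hne, hrk⟩ :=
      singular_big (K := AlgebraicClosure F) (p := ringChar F) hk2 hk1 hchar hm4
    exact hrk (hsm x hmem hne)
  · intro hm x hmem hne
    exact smooth_small (p := ringChar F) hk2 hk1 hd hchar hm x hmem hne
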